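/- Let Γ be a finite graph and F a subset of its vertices. Suppose every vertex not in F has degree exactly 2, and v ∈ F has odd degree. Then there exists a path in Γ from v to some vertex of F \ {v}. -/
import Mathlib


/-- The degree of a vertex in a finite multigraph given by an endpoint
assignment `ends : E → V × V`: the number of edge-endpoints at `v`
(loops count twice). -/
def Multigraph.deg {V E : Type*} [Fintype E] [DecidableEq V]
    (ends : E → V × V) (v : V) : ℕ :=
  ∑ e : E, ((if (ends e).1 = v then 1 else 0) + (if (ends e).2 = v then 1 else 0))

/-- Adjacency in a multigraph: some edge joins `v` and `w`. -/
def Multigraph.Adj {V E : Type*} (ends : E → V × V) (v w : V) : Prop :=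
  ∃ e : E, ends e = (v, w) ∨ ends e = (w, v)

/-- Existence of a path between vertices: a chain of edges. -/
def Multigraph.Reachable {V E : Type*} (ends : E → V × V) (v w : V) : Prop :=
  Relation.ReflTransGen (Multigraph.Adj ends) v w

/-- If every vertex outside `F` has degree exactly 2 and `v ∈ F` has odd degree,
then there is a path in the graph from `v` to some vertex of `F \ {v}`. -/
theorem path_to_other_vertex_of_F {V E : Type*} [Fintype V] [Fintype E]
    [DecidableEq V] (ends : E → V × V) (F : Set V) (v : V)
    (hv : v ∈ F) (hodd : Odd (Multigraph.deg ends v))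
    (hdeg : ∀ w : V, w ∉ F → Multigraph.deg ends w = 2) :
    ∃ w ∈ F \ {v}, Multigraph.Reachable ends v w := by
  classical
  by_contra h
  push_neg at h
  -- The set of vertices reachable from v
  set S : Finset V := Finset.univ.filter (Multigraph.Reachable ends v) with hS
  have hvS : v ∈ S := by
    simp only [hS, Finset.mem_filter, Finset.mem_univ, true_and]; exact Relation.ReflTransGen.refl
  have hclosed : ∀ e : E, ((ends e).1 ∈ S ↔ (ends e).2 ∈ S) := by
    intro e
    have h12 : Multigraph.Adj ends (ends e).1 (ends e).2 := ⟨e, Or.inl rfl⟩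
    have h21 : Multigraph.Adj ends (ends e).2 (ends e).1 := ⟨e, Or.inr rfl⟩
    simp only [hS, Finset.mem_filter, Finset.mem_univ, true_and]
    exact ⟨fun hr => hr.trans (Relation.ReflTransGen.single h12),
      fun hr => hr.trans (Relation.ReflTransGen.single h21)⟩
  -- The sum of degrees over S is even
  have hsum : ∑ w ∈ S, Multigraph.deg ends w
      = ∑ e : E, ((if (ends e).1 ∈ S then 1 else 0) + (if (ends e).2 ∈ S then 1 else 0)) := by
    unfold Multigraph.deg
    rw [Finset.sum_comm]
    refine Finset.sum_congr rfl fun e _ => ?_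
    rw [Finset.sum_add_distrib]
    congr 1 <;> simp [Finset.sum_ite_eq, eq_comm]
  have heven : Even (∑ w ∈ S, Multigraph.deg ends w) := by
    rw [hsum]
    apply Finset.even_sum
    intro e _
    by_cases h1 : (ends e).1 ∈ S
    · have h2 : (ends e).2 ∈ S := (hclosed e).mp h1
      simp [h1, h2]
    · have h2 : (ends e).2 ∉ S := fun h2 => h1 ((hclosed e).mpr h2)
      simp [h1, h2]
  -- But the sum is odd: v has odd degree, all others in S have degree 2
  have hoddsum : Odd (∑ w ∈ S, Multigraph.deg ends w) := by
    rw [← Finset.add_sum_erase S _ hvS]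
    refine hodd.add_even ?_
    apply Finset.even_sum
    intro w hw
    have hwv : w ≠ v := (Finset.mem_erase.mp hw).1
    have hwr : Multigraph.Reachable ends v w := by
      have := (Finset.mem_erase.mp hw).2
      simpa [hS] using this
    have hwF : w ∉ F := by
      intro hwF
      exact h w ⟨hwF, hwv⟩ hwr
    rw [hdeg w hwF]
    exact even_two
  exact (Nat.not_even_iff_odd.mpr hoddsum) heven
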